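/- For all real z > 0, the Digamma function ψ satisfies the upper bound ψ(z + 1/2) − ψ(z) < log(1 + 1/(2z)) + 1/z − 2/(2z + 1). -/

import Mathlib

noncomputable def digamma (z : ℝ) : ℝ := deriv Real.Gamma z / Real.Gamma z

open Real Filter

lemma diffGamma {z : ℝ} (hz : 0 < z) : DifferentiableAt ℝ Real.Gamma z :=
  Real.differentiableAt_Gamma (fun m =>
    ((neg_nonpos.mpr (Nat.cast_nonneg m)).trans_lt hz).ne')

lemma digamma_rec {z : ℝ} (hz : 0 < z) : digamma (z + 1) = digamma z + 1 / z := by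
  have hG := Real.Gamma_pos_of_pos hz
  have h1 : HasDerivAt Real.Gamma (deriv Real.Gamma z) z := (diffGamma hz).hasDerivAt
  have h2 : HasDerivAt Real.Gamma (deriv Real.Gamma (z + 1)) (z + 1) :=
    (diffGamma (by linarith)).hasDerivAt
  have h3 : HasDerivAt (fun x => Real.Gamma (x + 1)) (deriv Real.Gamma (z + 1)) z := by
    simpa [Function.comp_def] using h2.comp z ((hasDerivAt_id z).add_const 1)
  have h4 : HasDerivAt (fun x => x * Real.Gamma x)
      (1 * Real.Gamma z + z * deriv Real.Gamma z) z := (hasDerivAt_id z).mul h1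
  have heq : (fun x => x * Real.Gamma x) =ᶠ[nhds z] (fun x => Real.Gamma (x + 1)) := by
    filter_upwards [eventually_gt_nhds hz] with x hx
    rw [Real.Gamma_add_one hx.ne']
  have h5 := h4.congr_of_eventuallyEq heq.symm
  have key := h3.unique h5
  unfold digamma
  rw [Real.Gamma_add_one hz.ne', key]
  field_simp
  ring

lemma digamma_mono {a b : ℝ} (ha : 0 < a) (hab : a ≤ b) : digamma a ≤ digamma b := by
  have hb : 0 < b := lt_of_lt_of_le ha hab
  have hder : ∀ x : ℝ, 0 < x →
      HasDerivAt (Real.log ∘ Real.Gamma) (deriv Real.Gamma x / Real.Gamma x) x := fun x hx =>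
    (diffGamma hx).hasDerivAt.log (Real.Gamma_pos_of_pos hx).ne'
  have hd : ∀ x ∈ Set.Ioi (0:ℝ), DifferentiableAt ℝ (Real.log ∘ Real.Gamma) x := fun x hx =>
    (hder x hx).differentiableAt
  have hmono := Real.convexOn_log_Gamma.monotoneOn_deriv hd (Set.mem_Ioi.mpr ha)
    (Set.mem_Ioi.mpr hb) hab
  rwa [(hder a ha).deriv, (hder b hb).deriv] at hmono

noncomputable def Fd (z : ℝ) : ℝ := digamma (z + 1/2) - digamma z

noncomputable def Gd (z : ℝ) : ℝ := Real.log (1 + 1 / (2 * z)) + 1 / z - 2 / (2 * z + 1)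

lemma key_log {w : ℝ} (hw : 0 < w) :
    Real.log (1 + 1 / (2 * (w + 1))) - Real.log (1 + 1 / (2 * w))
      < 2 / (2 * (w + 1) + 1) - 1 / (w + 1) := by
  have ha : (2 * w) ≠ 0 := by positivity
  have hb : (2 * w + 1) ≠ 0 := by positivity
  have hc : (2 * w + 2) ≠ 0 := by positivity
  have hd : (2 * w + 3) ≠ 0 := by positivity
  have he : (w + 1) ≠ 0 := by positivity
  have e0 : 2 * (w + 1) = 2 * w + 2 := by ring
  have e0' : 2 * (w + 1) + 1 = 2 * w + 3 := by ring
  rw [e0', e0]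
  have hlog : Real.log (1 + 1 / (2 * w + 2)) - Real.log (1 + 1 / (2 * w))
      = Real.log (((2 * w + 3) * (2 * w)) / ((2 * w + 2) * (2 * w + 1))) := by
    rw [← Real.log_div (by positivity) (by positivity)]
    congr 1
    field_simp
    ring
  have hA : (0:ℝ) < ((2 * w + 3) * (2 * w)) / ((2 * w + 2) * (2 * w + 1)) := by positivity
  have h2 := Real.log_le_sub_one_of_pos hA
  have e1 : ((2 * w + 3) * (2 * w)) / ((2 * w + 2) * (2 * w + 1)) - 1
      = -(2 / ((2 * w + 2) * (2 * w + 1))) := by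
    field_simp
    ring
  have e2 : 2 / (2 * w + 3) - 1 / (w + 1) = -(1 / ((2 * w + 3) * (w + 1))) := by
    field_simp
    ring
  have h3 : (1:ℝ) / ((2 * w + 3) * (w + 1)) < 2 / ((2 * w + 2) * (2 * w + 1)) := by
    rw [div_lt_div_iff₀ (by positivity) (by positivity)]
    nlinarith
  linarith [hlog, h2, e1, e2, h3]

lemma stepH {w : ℝ} (hw : 0 < w) : Fd w - Gd w < Fd (w + 1) - Gd (w + 1) := by
  have hrec1 : digamma (w + 1) = digamma w + 1 / w := digamma_rec hw
  have hrec2 : digamma (w + 1/2 + 1) = digamma (w + 1/2) + 1 / (w + 1/2) :=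
    digamma_rec (by linarith)
  have e : w + 1 + 1/2 = w + 1/2 + 1 := by ring
  have hhalf : 1 / (w + 1/2) = 2 / (2 * w + 1) := by
    rw [div_eq_div_iff (by positivity) (by positivity)]
    ring
  have key := key_log hw
  unfold Fd Gd
  rw [e, hrec1, hrec2, hhalf]
  linarith

lemma indH {w : ℝ} (hw : 0 < w) : ∀ n : ℕ, Fd w - Gd w ≤ Fd (w + n) - Gd (w + n) := by
  intro n
  induction n with
  | zero => simp
  | succ k ih =>
    have hwk : 0 < w + k := by positivity
    have := stepH hwk
    have e : w + (k + 1 : ℕ) = w + k + 1 := by push_cast; ring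
    rw [e]
    linarith

lemma Fd_nonneg {w : ℝ} (hw : 0 < w) : 0 ≤ Fd w := by
  have := digamma_mono hw (by linarith : w ≤ w + 1/2)
  unfold Fd; linarith

lemma Fd_le {w : ℝ} (hw : 0 < w) : Fd w ≤ 1 / w := by
  have h1 : digamma (w + 1/2) ≤ digamma (w + 1) :=
    digamma_mono (by linarith) (by linarith)
  have h2 := digamma_rec hw
  unfold Fd; linarith

lemma tendH {z : ℝ} (hz : 0 < z) :
    Tendsto (fun n : ℕ => Fd (z + n) - Gd (z + n)) atTop (nhds 0) := by
  have h1 : Tendsto (fun n : ℕ => z + (n:ℝ)) atTop atTop :=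
    tendsto_atTop_add_const_left atTop z tendsto_natCast_atTop_atTop
  have hinv : Tendsto (fun n : ℕ => 1 / (z + (n:ℝ))) atTop (nhds 0) := by
    simpa only [one_div, Pi.inv_def] using h1.inv_tendsto_atTop
  have hF : Tendsto (fun n : ℕ => Fd (z + n)) atTop (nhds 0) := by
    refine squeeze_zero (fun n => Fd_nonneg (by positivity)) (fun n => Fd_le (by positivity)) hinv
  have ha : Tendsto (fun n : ℕ => 2 * (z + (n:ℝ))) atTop atTop :=
    h1.const_mul_atTop two_pos
  have hb : Tendsto (fun n : ℕ => 1 / (2 * (z + (n:ℝ)))) atTop (nhds 0) := by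
    simpa only [one_div, Pi.inv_def] using ha.inv_tendsto_atTop
  have hc : Tendsto (fun n : ℕ => 1 + 1 / (2 * (z + (n:ℝ)))) atTop (nhds 1) := by
    simpa using tendsto_const_nhds.add hb
  have hlog : Tendsto (fun n : ℕ => Real.log (1 + 1 / (2 * (z + (n:ℝ))))) atTop (nhds 0) := by
    have := (Real.continuousAt_log one_ne_zero).tendsto.comp hc
    simpa [Function.comp_def] using this
  have hd' : Tendsto (fun n : ℕ => 2 * (z + (n:ℝ)) + 1) atTop atTop :=
    tendsto_atTop_add_const_right atTop 1 ha
  have he' : Tendsto (fun n : ℕ => 2 / (2 * (z + (n:ℝ)) + 1)) atTop (nhds 0) := by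
    have := hd'.inv_tendsto_atTop.const_mul (2:ℝ)
    simpa [div_eq_mul_inv] using this
  have hG : Tendsto (fun n : ℕ => Gd (z + n)) atTop (nhds 0) := by
    have := (hlog.add hinv).sub he'
    simpa [Gd] using this
  simpa using hF.sub hG

theorem digamma_upper_bound (z : ℝ) (hz : 0 < z) :
    digamma (z + 1/2) - digamma z
      < Real.log (1 + 1 / (2 * z)) + 1 / z - 2 / (2 * z + 1) := by
  have h1 : Fd z - Gd z < Fd (z + 1) - Gd (z + 1) := stepH hz
  have h2 : ∀ n : ℕ, Fd (z + 1) - Gd (z + 1) ≤ Fd (z + 1 + n) - Gd (z + 1 + n) :=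
    indH (by linarith)
  have h3 : Tendsto (fun n : ℕ => Fd (z + 1 + n) - Gd (z + 1 + n)) atTop (nhds 0) :=
    tendH (by linarith)
  have h4 : Fd (z + 1) - Gd (z + 1) ≤ 0 := ge_of_tendsto' h3 h2
  have h5 : Fd z - Gd z < 0 := lt_of_lt_of_le h1 h4
  unfold Fd Gd at h5
  linarith
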